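/- arXiv:0810.4767 — 5 statements merged into one kernel-verified Lean document; each statement's English description precedes it below -/
import Mathlib

section
/- Let X be a 2n×r complex matrix and Y a 2n×(2n−r) complex matrix, and let K_n be the 2n×2n block matrix with blocks (0, −I_n; I_n, 0). Then the complex conjugate of det[X | K_n·conj(Y)] equals det[Y | K_n·conj(X)], where [A | B] denotes the 2n×2n matrix formed by placing the columns of A followed by the columns of B. -/
open Matrix Complex

/-- The `2n × 2n` matrix with blocks `(0, -I_n; I_n, 0)`. -/
noncomputable def Kmat (n : ℕ) : Matrix (Fin (n + n)) (Fin (n + n)) ℂ :=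
  Matrix.of fun i j =>
    if (i : ℕ) < n then (if (j : ℕ) = (i : ℕ) + n then -1 else 0)
    else (if (i : ℕ) = (j : ℕ) + n then 1 else 0)

/-- Horizontal concatenation `[X | Y]` of the columns of `X` followed by those of `Y`. -/
noncomputable def concatCols {N r s : ℕ} (h : r + s = N)
    (X : Matrix (Fin N) (Fin r) ℂ) (Y : Matrix (Fin N) (Fin s) ℂ) :
    Matrix (Fin N) (Fin N) ℂ :=
  Matrix.of fun i j =>
    if hj : (j : ℕ) < r then X i ⟨j, hj⟩
    else Y i ⟨(j : ℕ) - r, by have := j.isLt; omega⟩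

/-- The permutation of `Fin N` (with `m + k = N`) sending `j < m` to `k + j`
and `j ≥ m` to `j - m`. -/
def flipPerm (m k : ℕ) {N : ℕ} (h : m + k = N) : Equiv.Perm (Fin N) :=
  (finCongr h.symm).trans ((finAddFlip).trans (finCongr (by omega : k + m = N)))

lemma flipPerm_val (m k : ℕ) {N : ℕ} (h : m + k = N) (j : Fin N) :
    ((flipPerm m k h) j : ℕ) = if (j : ℕ) < m then k + (j : ℕ) else (j : ℕ) - m := by
  unfold flipPerm
  by_cases hj : (j : ℕ) < m
  · rw [if_pos hj]
    simp only [Equiv.trans_apply, finCongr_apply_coe]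
    have : finCongr h.symm j = (⟨(j : ℕ), by omega⟩ : Fin (m + k)) := by
      ext; simp
    rw [this, finAddFlip_apply_mk_left hj]
  · rw [if_neg hj]
    simp only [Equiv.trans_apply, finCongr_apply_coe]
    have : finCongr h.symm j = (⟨(j : ℕ), by omega⟩ : Fin (m + k)) := by
      ext; simp
    rw [this, finAddFlip_apply_mk_right (by omega) (by omega)]

lemma finRotate_pow_val (N k : ℕ) (j : Fin (N + 1)) :
    (((finRotate (N + 1)) ^ k) j : ℕ) = ((j : ℕ) + k) % (N + 1) := by
  induction k generalizing j with
  | zero => simp [Nat.mod_eq_of_lt j.isLt]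
  | succ k ih =>
    rw [pow_succ, Equiv.Perm.mul_apply, ih]
    have hv : ((finRotate (N + 1)) j : ℕ) = ((j : ℕ) + 1) % (N + 1) := by
      rw [finRotate_succ_apply, Fin.val_add, Fin.val_one']
      conv_rhs => rw [Nat.add_mod]
      rw [Nat.mod_eq_of_lt j.isLt]
    rw [hv, Nat.mod_add_mod]
    exact congrArg (· % (N + 1)) (by omega)

lemma sign_flipPerm (m k : ℕ) {N : ℕ} (h : m + k = N) :
    Equiv.Perm.sign (flipPerm m k h) = (-1) ^ (m * k) := by
  cases N with
  | zero =>
    have hm : m = 0 := by omega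
    have hperm : flipPerm m k h = 1 := by
      ext j; exact absurd j.isLt (by omega)
    rw [hperm]; simp [hm]
  | succ N' =>
    have hpow : flipPerm m k h = (finRotate (N' + 1)) ^ k := by
      ext j
      rw [flipPerm_val, finRotate_pow_val]
      by_cases hj : (j : ℕ) < m
      · rw [if_pos hj, Nat.mod_eq_of_lt (by omega)]; omega
      · rw [if_neg hj]
        have h1 : (j : ℕ) + k - (N' + 1) < N' + 1 := by have := j.isLt; omega
        have h2 : N' + 1 ≤ (j : ℕ) + k := by omega
        rw [Nat.mod_eq_sub_mod h2, Nat.mod_eq_of_lt h1]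
        omega
    rw [hpow, map_pow, sign_finRotate, ← pow_mul, Nat.add_sub_cancel]
    have hpar : Even (N' * k) ↔ Even (m * k) := by
      rw [Nat.even_mul, Nat.even_mul, Nat.even_iff, Nat.even_iff, Nat.even_iff]
      omega
    rcases Nat.even_or_odd (m * k) with he | ho
    · rw [he.neg_one_pow, (hpar.mpr he).neg_one_pow]
    · have hO : Odd (N' * k) :=
        Nat.not_even_iff_odd.mp fun hE => (Nat.not_odd_iff_even.mpr (hpar.mp hE)) ho
      rw [ho.neg_one_pow, hO.neg_one_pow]

lemma Kmat_mul_apply {n c : ℕ} (M : Matrix (Fin (n + n)) (Fin c) ℂ)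
    (i : Fin (n + n)) (j : Fin c) :
    (Kmat n * M) i j =
      if hi : (i : ℕ) < n then -(M ⟨(i : ℕ) + n, by omega⟩ j)
      else M ⟨(i : ℕ) - n, by have := i.isLt; omega⟩ j := by
  rw [Matrix.mul_apply]
  by_cases hi : (i : ℕ) < n
  · rw [dif_pos hi]
    rw [Finset.sum_eq_single (⟨(i : ℕ) + n, by omega⟩ : Fin (n + n))]
    · simp [Kmat, hi]
    · intro k _ hk
      have hkk : ¬ ((k : ℕ) = (i : ℕ) + n) := fun hkk => hk (Fin.ext hkk)
      simp [Kmat, hi, hkk]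
    · simp
  · rw [dif_neg hi]
    rw [Finset.sum_eq_single (⟨(i : ℕ) - n, by have := i.isLt; omega⟩ : Fin (n + n))]
    · simp [Kmat, hi, Nat.sub_add_cancel (le_of_not_gt hi)]
    · intro k _ hk
      have hkk : ¬ ((i : ℕ) = (k : ℕ) + n) :=
        fun hkk => hk (Fin.ext (show (k : ℕ) = (i : ℕ) - n by omega))
      simp [Kmat, hi, hkk]
    · simp

lemma Kmat_mul_Kmat (n : ℕ) : Kmat n * Kmat n = -1 := by
  ext i j
  rw [Kmat_mul_apply]
  by_cases hi : (i : ℕ) < n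
  · rw [dif_pos hi]
    have h1 : ¬ ((i : ℕ) + n < n) := by omega
    by_cases hij : i = j
    · subst hij
      simp [Kmat, h1, Matrix.one_apply]
    · have h2 : ¬ ((i : ℕ) + n = (j : ℕ) + n) := fun hE => hij (Fin.ext (by omega))
      simp [Kmat, h1, h2, Matrix.one_apply, hij, Fin.val_inj]
  · rw [dif_neg hi]
    have h1 : (i : ℕ) - n < n := by have := i.isLt; omega
    by_cases hij : i = j
    · subst hij
      have h2 : (i : ℕ) = (i : ℕ) - n + n := by omega
      simp [Kmat, h1, ← h2, Matrix.one_apply]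
    · have h2 : ¬ ((j : ℕ) = (i : ℕ) - n + n) := fun hE => hij (Fin.ext (by omega))
      simp [Kmat, h1, h2, Matrix.one_apply, hij]

lemma mul_concatCols {N r s : ℕ} (h : r + s = N) (M : Matrix (Fin N) (Fin N) ℂ)
    (A : Matrix (Fin N) (Fin r) ℂ) (B : Matrix (Fin N) (Fin s) ℂ) :
    M * concatCols h A B = concatCols h (M * A) (M * B) := by
  ext i j
  by_cases hj : (j : ℕ) < r
  · simp only [concatCols, Matrix.mul_apply, Matrix.of_apply, dif_pos hj]
  · simp only [concatCols, Matrix.mul_apply, Matrix.of_apply, dif_neg hj]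

lemma concatCols_map {N r s : ℕ} (h : r + s = N) (A : Matrix (Fin N) (Fin r) ℂ)
    (B : Matrix (Fin N) (Fin s) ℂ) (f : ℂ → ℂ) :
    (concatCols h A B).map f = concatCols h (A.map f) (B.map f) := by
  ext i j
  by_cases hj : (j : ℕ) < r <;> simp [concatCols, hj]

lemma concatCols_neg_right {N r s : ℕ} (h : r + s = N) (A : Matrix (Fin N) (Fin r) ℂ)
    (B : Matrix (Fin N) (Fin s) ℂ) :
    concatCols h A (-B) =
      concatCols h A B * Matrix.diagonal (fun j : Fin N => if (j : ℕ) < r then 1 else -1) := by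
  ext i j
  rw [Matrix.mul_diagonal]
  by_cases hj : (j : ℕ) < r <;> simp [concatCols, hj]

lemma concatCols_swap {N r s : ℕ} (h : r + s = N) (h' : s + r = N)
    (A : Matrix (Fin N) (Fin r) ℂ) (B : Matrix (Fin N) (Fin s) ℂ) :
    concatCols h' B A = (concatCols h A B).submatrix id (flipPerm s r h') := by
  ext i j
  rw [Matrix.submatrix_apply, id]
  by_cases hj : (j : ℕ) < s
  · have hv : ((flipPerm s r h') j : ℕ) = r + (j : ℕ) := by rw [flipPerm_val, if_pos hj]
    have h1 : ¬ (r + (j : ℕ) < r) := by omega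
    simp [concatCols, hj, hv, h1]
  · have hv : ((flipPerm s r h') j : ℕ) = (j : ℕ) - s := by rw [flipPerm_val, if_neg hj]
    have h1 : (j : ℕ) - s < r := by have := j.isLt; omega
    simp [concatCols, hj, hv, h1]

lemma prod_ite_lt (N r s : ℕ) (h : r + s = N) :
    ∏ j : Fin N, (if (j : ℕ) < r then (1 : ℂ) else -1) = (-1) ^ s := by
  have h1 : ∀ a : Fin r,
      (if (((finSumFinEquiv.trans (finCongr h)) (Sum.inl a) : Fin N) : ℕ) < r
        then (1 : ℂ) else -1) = 1 := by
    intro a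
    apply if_pos
    simp
  have h2 : ∀ b : Fin s,
      (if (((finSumFinEquiv.trans (finCongr h)) (Sum.inr b) : Fin N) : ℕ) < r
        then (1 : ℂ) else -1) = -1 := by
    intro b
    apply if_neg
    simp
  rw [← Equiv.prod_comp (finSumFinEquiv.trans (finCongr h)), Fintype.prod_sum_type]
  rw [Finset.prod_congr rfl (fun a _ => h1 a), Finset.prod_congr rfl (fun b _ => h2 b)]
  simp

lemma Kmat_eq (n : ℕ) :
    Kmat n = (Matrix.diagonal (fun j : Fin (n + n) => if (j : ℕ) < n then (1 : ℂ) else -1)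
      ).submatrix (flipPerm n n rfl) id := by
  ext i j
  rw [Matrix.submatrix_apply, id, Matrix.diagonal_apply]
  by_cases hi : (i : ℕ) < n
  · have hv : ((flipPerm n n rfl) i : ℕ) = n + (i : ℕ) := by rw [flipPerm_val, if_pos hi]
    by_cases hij : (j : ℕ) = (i : ℕ) + n
    · rw [if_pos (Fin.ext (by omega : ((flipPerm n n rfl) i : ℕ) = (j : ℕ)))]
      simp [Kmat, hi, hij, hv, show ¬ (n + (i : ℕ) < n) by omega]
    · rw [if_neg (fun hE => hij (by have := congrArg Fin.val hE; omega))]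
      simp [Kmat, hi, hij]
  · have hv : ((flipPerm n n rfl) i : ℕ) = (i : ℕ) - n := by rw [flipPerm_val, if_neg hi]
    by_cases hij : (i : ℕ) = (j : ℕ) + n
    · rw [if_pos (Fin.ext (by omega : ((flipPerm n n rfl) i : ℕ) = (j : ℕ)))]
      simp [Kmat, hi, hij, hv, show (i : ℕ) - n < n by have := i.isLt; omega,
        show (j : ℕ) < n by have := i.isLt; omega]
    · rw [if_neg (fun hE => hij (by have := congrArg Fin.val hE; omega))]
      simp [Kmat, hi, hij]

lemma det_Kmat (n : ℕ) : (Kmat n).det = 1 := by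
  rw [Kmat_eq, Matrix.det_permute, Matrix.det_diagonal, sign_flipPerm,
    prod_ite_lt (n + n) n n rfl]
  push_cast
  rw [← pow_add]
  have hev : Even (n * n + n) := by
    rcases Nat.even_or_odd n with hn | hn
    · exact (hn.mul_left n).add hn
    · exact (hn.mul hn).add_odd hn
  exact Even.neg_one_pow hev

lemma key_det (n r s : ℕ) (h : r + s = n + n) (h' : s + r = n + n)
    (A : Matrix (Fin (n + n)) (Fin r) ℂ) (B : Matrix (Fin (n + n)) (Fin s) ℂ) :
    (concatCols h A (Kmat n * B)).det = (concatCols h' B (Kmat n * A)).det := by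
  have hps : ((-1 : ℂ)) ^ (s * r) = (-1 : ℂ) ^ s := by
    rcases Nat.even_or_odd s with hs | hs
    · rw [hs.neg_one_pow, (hs.mul_right r).neg_one_pow]
    · have hr : Odd r := Nat.odd_iff.mpr (by have := Nat.odd_iff.mp hs; omega)
      rw [hs.neg_one_pow, (hs.mul hr).neg_one_pow]
  have hL : (concatCols h A (Kmat n * B)).det
      = (concatCols h (Kmat n * A) B).det * (-1) ^ s := by
    calc (concatCols h A (Kmat n * B)).det
        = (Kmat n).det * (concatCols h A (Kmat n * B)).det := by rw [det_Kmat, one_mul]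
      _ = (Kmat n * concatCols h A (Kmat n * B)).det := (Matrix.det_mul _ _).symm
      _ = (concatCols h (Kmat n * A) (-B)).det := by
          rw [mul_concatCols, ← Matrix.mul_assoc, Kmat_mul_Kmat, Matrix.neg_mul,
            Matrix.one_mul]
      _ = (concatCols h (Kmat n * A) B).det * (-1) ^ s := by
          rw [concatCols_neg_right, Matrix.det_mul, Matrix.det_diagonal,
            prod_ite_lt (n + n) r s h]
  have hR : (concatCols h' B (Kmat n * A)).det
      = (-1) ^ (s * r) * (concatCols h (Kmat n * A) B).det := by
    rw [concatCols_swap h h', Matrix.det_permute', sign_flipPerm]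
    push_cast
    ring
  rw [hL, hR, hps]
  ring

theorem conj_det_concat (n r s : ℕ) (h : r + s = n + n)
    (X : Matrix (Fin (n + n)) (Fin r) ℂ) (Y : Matrix (Fin (n + n)) (Fin s) ℂ) :
    (starRingEnd ℂ) (concatCols h X (Kmat n * Y.map (starRingEnd ℂ))).det
      = (concatCols (by omega : s + r = n + n) Y (Kmat n * X.map (starRingEnd ℂ))).det := by
  have hc : (starRingEnd ℂ) (concatCols h X (Kmat n * Y.map (starRingEnd ℂ))).det
      = ((concatCols h X (Kmat n * Y.map (starRingEnd ℂ))).map (starRingEnd ℂ)).det := by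
    rw [RingHom.map_det]
    rfl
  have hK : (Kmat n).map (starRingEnd ℂ) = Kmat n := by
    ext i j
    simp only [Kmat, Matrix.map_apply, Matrix.of_apply]
    split_ifs <;> simp
  have hY : (Y.map (starRingEnd ℂ)).map (starRingEnd ℂ) = Y := by
    ext i j
    simp
  rw [hc, concatCols_map, Matrix.map_mul, hK, hY]
  exact key_det n r s h (by omega) (X.map (starRingEnd ℂ)) Y
end

section
/- Let A and B be n×n complex matrices and let T be the 2n×2n block matrix (A, B; −conj(B), conj(A)). Then det T is a nonnegative real number. -/
open Matrix Complex

open Polynomial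

noncomputable section

namespace DetBlockConjAux

local notation "conj'" => starRingEnd ℂ

variable {ι : Type} [Fintype ι] [DecidableEq ι]

/-- Charpoly is invariant under intertwining by an invertible matrix. -/
lemma charpoly_eq_of_intertwine (P M N : Matrix ι ι ℂ) (hP : IsUnit P.det)
    (h : P * M = N * P) : N.charpoly = M.charpoly := by
  have hM : charmatrix M = Matrix.diagonal (fun _ => (X : ℂ[X])) - M.map C := by
    ext i j
    rw [charmatrix_apply]
    simp [Matrix.map_apply]
  have hN : charmatrix N = Matrix.diagonal (fun _ => (X : ℂ[X])) - N.map C := by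
    ext i j
    rw [charmatrix_apply]
    simp [Matrix.map_apply]
  have key : P.map C * charmatrix M = charmatrix N * P.map C := by
    rw [hM, hN, Matrix.mul_sub, Matrix.sub_mul, ← Matrix.map_mul, h, Matrix.map_mul]
    congr 1
    ext i j
    simp only [Matrix.mul_apply, Matrix.diagonal_apply, Matrix.map_apply, ite_mul, mul_ite,
      zero_mul, mul_zero]
    rw [Finset.sum_ite_eq', Finset.sum_ite_eq]
    simp only [Finset.mem_univ, if_true]
    ring_nf
  have hdet := congrArg Matrix.det key
  rw [Matrix.det_mul, Matrix.det_mul, mul_comm ((charmatrix N).det)] at hdet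
  have hPC : (P.map (C : ℂ →+* ℂ[X])).det = C P.det := ((C : ℂ →+* ℂ[X]).map_det P).symm
  rw [hPC] at hdet
  have hu : IsUnit (C (P.det)) := hP.map (C : ℂ →+* ℂ[X])
  exact (hu.mul_left_cancel hdet.symm)

/-- Shifting: `charpoly M` composed with `X + C t` is the charpoly of `M - t • 1`. -/
lemma charpoly_comp_shift (M : Matrix ι ι ℂ) (t : ℂ) :
    M.charpoly.comp (X + C t) = (M - t • 1).charpoly := by
  have hf : ∀ p : ℂ[X], eval₂ (C : ℂ →+* ℂ[X]) (X + C t) p = p.comp (X + C t) := by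
    intro p; rfl
  have key : (charmatrix M).map (eval₂RingHom (C : ℂ →+* ℂ[X]) (X + C t) : ℂ[X] →+* ℂ[X])
      = charmatrix (M - t • 1) := by
    ext i j : 2
    by_cases hij : i = j
    · subst hij
      simp only [Matrix.map_apply, charmatrix_apply_eq, coe_eval₂RingHom]
      rw [eval₂_sub, eval₂_X, eval₂_C]
      simp [Matrix.sub_apply, Matrix.smul_apply, Matrix.one_apply, C_sub]
      ring
    · simp only [Matrix.map_apply, charmatrix_apply_ne _ _ _ hij, coe_eval₂RingHom,
        eval₂_neg, eval₂_C, Matrix.sub_apply, Matrix.smul_apply, Matrix.one_apply_ne hij]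
      simp
  calc M.charpoly.comp (X + C t)
      = (eval₂RingHom (C : ℂ →+* ℂ[X]) (X + C t)) (charmatrix M).det := by
        rw [Matrix.charpoly]; exact (hf _).symm
    _ = ((charmatrix M).map (eval₂RingHom (C : ℂ →+* ℂ[X]) (X + C t) : ℂ[X] →+* ℂ[X])).det := by
        rw [RingHom.map_det]; rfl
    _ = (M - t • 1).charpoly := by rw [key, Matrix.charpoly]

lemma conj_count (s : Multiset ℂ) (hmap : s.map conj' = s) (z : ℂ) :
    s.count (conj' z) = s.count z := by
  have h := Multiset.count_map_eq_count' (⇑conj') s (RingHom.injective _) z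
  rwa [hmap] at h

lemma multiset_conj_pair (s : Multiset ℂ) (hmap : s.map conj' = s)
    (heven : ∀ z : ℂ, z.im = 0 → Even (s.count z)) :
    ∃ t : Multiset ℂ, s = t + t.map conj' := by
  induction s using Multiset.strongInductionOn with
  | ih s ih =>
  rcases Multiset.empty_or_exists_mem s with rfl | ⟨a, ha⟩
  · exact ⟨0, by simp⟩
  have hcount := conj_count s hmap
  have hca : conj' a ∈ s.erase a := by
    by_cases him : a.im = 0
    · have hfix : conj' a = a := Complex.conj_eq_iff_im.mpr him
      rw [hfix]
      have h2 : 2 ≤ s.count a := by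
        have he := heven a him
        have hpos : 0 < s.count a := Multiset.count_pos.mpr ha
        rcases he with ⟨k, hk⟩
        omega
      rw [← Multiset.count_pos, Multiset.count_erase_self]
      omega
    · have hne : conj' a ≠ a := fun h => him (Complex.conj_eq_iff_im.mp h)
      rw [← Multiset.count_pos, Multiset.count_erase_of_ne hne]
      rw [hcount a]
      exact Multiset.count_pos.mpr ha
  set s' := (s.erase a).erase (conj' a) with hs'
  have hrepr : s = a ::ₘ conj' a ::ₘ s' := by
    rw [hs', Multiset.cons_erase hca, Multiset.cons_erase ha]
  have hlt : s' < s := by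
    rw [hrepr]
    calc s' < conj' a ::ₘ s' := Multiset.lt_cons_self _ _
      _ < a ::ₘ conj' a ::ₘ s' := Multiset.lt_cons_self _ _
  have hcount' : ∀ z : ℂ, s'.count (conj' z) = s'.count z := by
    intro z
    have h1 := hcount z
    have e1 : ((conj' z = a) ↔ (z = conj' a)) := by
      constructor
      · intro h; rw [← h]; simp
      · intro h; rw [h]; simp
    have e2 : ((conj' z = conj' a) ↔ (z = a)) := ⟨fun h => RingHom.injective _ h, fun h => by rw [h]⟩
    rw [hrepr] at h1
    simp only [Multiset.count_cons] at h1
    by_cases k1 : z = a <;> by_cases k2 : z = conj' a <;>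
      simp [k1, k2, e1, e2, eq_comm] at h1 ⊢ <;> omega
  have hmap' : s'.map conj' = s' := by
    ext z
    have h := Multiset.count_map_eq_count' (⇑conj') s' (RingHom.injective _) (conj' z)
    simp only [Complex.conj_conj] at h
    rw [h, hcount']
  have heven' : ∀ z : ℂ, z.im = 0 → Even (s'.count z) := by
    intro z hz
    have h1 := heven z hz
    by_cases k1 : z = a
    · have k2 : z = conj' a := by
        rw [k1] at hz ⊢
        exact (Complex.conj_eq_iff_im.mpr hz).symm
      have h2 : s.count z = 2 + s'.count z := by
        rw [hrepr, Multiset.count_cons, Multiset.count_cons, if_pos k1, if_pos k2]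
        omega
      rw [Nat.even_iff] at h1 ⊢
      omega
    · have k2 : z ≠ conj' a := by
        intro h
        apply k1
        have h3 : conj' z = a := by rw [h]; simp
        rw [← h3, Complex.conj_eq_iff_im.mpr hz]
      have h2 : s.count z = s'.count z := by
        rw [hrepr, Multiset.count_cons, Multiset.count_cons, if_neg k1, if_neg k2]
        omega
      rwa [h2] at h1
  obtain ⟨t', ht'⟩ := ih s' hlt hmap' heven'
  refine ⟨a ::ₘ t', ?_⟩
  rw [hrepr, ht']
  simp only [Multiset.map_cons, Multiset.cons_add]
  congr 1
  rw [Multiset.add_cons]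

lemma even_finrank_aux (N : ℕ) :
    ∀ (E : Type) (_ : AddCommGroup E), ∀ (_ : Module ℂ E), ∀ (_ : FiniteDimensional ℂ E),
      Module.finrank ℂ E ≤ N → ∀ (f : E → E),
      (∀ x y, f (x + y) = f x + f y) →
      (∀ (c : ℂ) (x : E), f (c • x) = (conj' c) • f x) →
      (∀ x, f (f x) = - x) →
      Even (Module.finrank ℂ E) := by
  induction N with
  | zero =>
    intro E _ _ _ hle f _ _ _
    rw [Nat.le_zero.mp hle]
    exact Even.zero
  | succ N ih =>
    intro E _ _ _ hle f hadd hsmul hff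
    by_cases h0 : Module.finrank ℂ E = 0
    · rw [h0]; exact Even.zero
    have hnt : Nontrivial E := by
      rcases Module.finrank_pos_iff (R := ℂ) (M := E) |>.mp (Nat.pos_of_ne_zero h0) with h
      exact h
    obtain ⟨x, hx⟩ := exists_ne (0 : E)
    have hf0 : f 0 = 0 := by
      have h := hadd 0 0
      rw [add_zero] at h
      have := congrArg (fun y => y - f 0) h
      simpa using this.symm
    have hfneg : ∀ y, f (-y) = - f y := by
      intro y
      have h := hadd y (-y)
      rw [add_neg_cancel, hf0] at h
      have h2 : f (-y) + f y = 0 := by rw [add_comm]; exact h.symm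
      exact eq_neg_of_add_eq_zero_left h2
    have hli : LinearIndependent ℂ ![x, f x] := by
      rw [LinearIndependent.pair_iff]
      intro s t hst
      have h2 : conj' s • f x + conj' t • (-x) = 0 := by
        have h := congrArg f hst
        rw [hadd, hsmul, hsmul, hff, hf0] at h
        exact h
      have h3 : (conj' s) • (s • x + t • f x) = 0 := by rw [hst, smul_zero]
      have h4 : (t : ℂ) • (conj' s • f x + conj' t • (-x)) = 0 := by rw [h2, smul_zero]
      have h7 : (conj' s * s + t * conj' t) • x = 0 := by
        have key : (conj' s * s + t * conj' t) • x =
            (conj' s) • (s • x + t • f x) - (t : ℂ) • (conj' s • f x + conj' t • (-x)) := by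
          module
        rw [key, h3, h4, sub_zero]
      have hs0 : conj' s * s + t * conj' t = 0 := by
        rcases smul_eq_zero.mp h7 with h | h
        · exact h
        · exact absurd h hx
      rw [mul_comm (conj' s) s, Complex.mul_conj, Complex.mul_conj] at hs0
      have hs2 : Complex.normSq s + Complex.normSq t = 0 := by
        rw [← Complex.ofReal_add, Complex.ofReal_eq_zero] at hs0
        exact hs0
      constructor
      · exact Complex.normSq_eq_zero.mp (by
          have h1 := Complex.normSq_nonneg s
          have h2 := Complex.normSq_nonneg t
          linarith)
      · exact Complex.normSq_eq_zero.mp (by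
          have h1 := Complex.normSq_nonneg s
          have h2 := Complex.normSq_nonneg t
          linarith)
    set W : Submodule ℂ E := Submodule.span ℂ (Set.range ![x, f x]) with hWdef
    have hW2 : Module.finrank ℂ W = 2 := by
      rw [hWdef, finrank_span_eq_card hli]
      simp
    have hWinv : ∀ w ∈ W, f w ∈ W := by
      intro w hw
      rw [hWdef] at hw
      induction hw using Submodule.span_induction with
      | mem y hy =>
        rcases hy with ⟨i, rfl⟩
        fin_cases i
        · show f x ∈ W
          exact Submodule.subset_span ⟨1, rfl⟩
        · show f (f x) ∈ W
          rw [hff]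
          exact W.neg_mem (Submodule.subset_span ⟨0, rfl⟩)
      | zero => rw [hf0]; exact W.zero_mem
      | add a b ha hb iha ihb => rw [hadd]; exact W.add_mem iha ihb
      | smul c a ha iha => rw [hsmul]; exact W.smul_mem _ iha
    have hQrank : Module.finrank ℂ (E ⧸ W) + 2 = Module.finrank ℂ E := by
      rw [← hW2]
      exact Submodule.finrank_quotient_add_finrank W
    let g : (E ⧸ W) → (E ⧸ W) := fun q => Quotient.liftOn' q
      (fun a => Submodule.Quotient.mk (f a)) (by
        intro a b hab
        have h : a - b ∈ W := (Submodule.quotientRel_def _).mp hab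
        apply (Submodule.Quotient.eq W).mpr
        have heq : f a - f b = f (a - b) := by
          rw [sub_eq_add_neg, sub_eq_add_neg, hadd, hfneg]
        rw [heq]
        exact hWinv _ h)
    have hg_mk : ∀ a : E, g (Submodule.Quotient.mk a) = Submodule.Quotient.mk (f a) :=
      fun a => rfl
    have hgadd : ∀ p q : E ⧸ W, g (p + q) = g p + g q := by
      intro p q
      obtain ⟨a, rfl⟩ := Submodule.Quotient.mk_surjective W p
      obtain ⟨b, rfl⟩ := Submodule.Quotient.mk_surjective W q
      rw [← Submodule.Quotient.mk_add, hg_mk, hg_mk, hg_mk, hadd, Submodule.Quotient.mk_add]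
    have hgsmul : ∀ (c : ℂ) (p : E ⧸ W), g (c • p) = (conj' c) • g p := by
      intro c p
      obtain ⟨a, rfl⟩ := Submodule.Quotient.mk_surjective W p
      rw [← Submodule.Quotient.mk_smul, hg_mk, hg_mk, hsmul, Submodule.Quotient.mk_smul]
    have hgg : ∀ p : E ⧸ W, g (g p) = - p := by
      intro p
      obtain ⟨a, rfl⟩ := Submodule.Quotient.mk_surjective W p
      rw [hg_mk, hg_mk, hff, Submodule.Quotient.mk_neg]
    have hle' : Module.finrank ℂ (E ⧸ W) ≤ N := by omega
    have hevenQ := ih (E ⧸ W) _ _ (FiniteDimensional.finiteDimensional_quotient W) hle' g hgadd hgsmul hgg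
    rw [← hQrank]
    rcases hevenQ with ⟨k, hk⟩
    exact ⟨k + 1, by omega⟩

section Quaternionic

variable (Jm M : Matrix ι ι ℂ)

/-- entrywise conjugation of a vector -/
def cv (v : ι → ℂ) : ι → ℂ := fun i => conj' (v i)

lemma cv_cv (v : ι → ℂ) : cv (cv v) = v := by
  funext i; simp [cv]

lemma cv_mulVec (v : ι → ℂ) : cv (M.mulVec v) = (M.map conj').mulVec (cv v) := by
  funext i
  simp [cv, Matrix.mulVec, dotProduct, map_sum, Matrix.map_apply]

lemma even_finrank_maxGen
    (hJJ : Jm * Jm = -1) (hJc : Jm.map conj' = Jm)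
    (hq : Jm * M = M.map conj' * Jm) :
    Even (Module.finrank ℂ
      (Module.End.maxGenEigenspace (Matrix.toLin' M : Module.End ℂ (ι → ℂ)) 0)) := by
  set φ : Module.End ℂ (ι → ℂ) := Matrix.toLin' M with hφ
  set U : Submodule ℂ (ι → ℂ) := φ.maxGenEigenspace 0 with hU
  -- the antilinear structure
  set j : (ι → ℂ) → (ι → ℂ) := fun v => Jm.mulVec (cv v) with hj
  have hq' : Jm * M.map conj' = M * Jm := by
    have h := congrArg (fun X => X.map conj') hq
    simp only [Matrix.map_mul] at h
    rw [hJc] at h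
    rw [Matrix.map_map] at h
    have hcc : (conj' : ℂ → ℂ) ∘ (conj' : ℂ → ℂ) = id := by
      funext z; simp
    rw [hcc, Matrix.map_id] at h
    exact h
  have hcomm : ∀ v, j (M.mulVec v) = M.mulVec (j v) := by
    intro v
    rw [hj]
    simp only
    rw [cv_mulVec, Matrix.mulVec_mulVec, hq', ← Matrix.mulVec_mulVec]
  have hjj : ∀ v, j (j v) = -v := by
    intro v
    simp only [hj]
    rw [cv_mulVec, cv_cv, hJc, Matrix.mulVec_mulVec, hJJ]
    funext i
    simp [Matrix.mulVec, dotProduct, Matrix.neg_apply, Matrix.one_apply, ite_mul,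
      Finset.sum_ite_eq]
  have hjadd : ∀ u v, j (u + v) = j u + j v := by
    intro u v
    simp only [hj]
    have : cv (u + v) = cv u + cv v := by funext i; simp [cv]
    rw [this, Matrix.mulVec_add]
  have hjsmul : ∀ (c : ℂ) v, j (c • v) = conj' c • j v := by
    intro c v
    simp only [hj]
    have : cv (c • v) = conj' c • cv v := by funext i; simp [cv]
    rw [this, Matrix.mulVec_smul]
  have hpow : ∀ (k : ℕ) (x : ι → ℂ), (φ ^ k) x = (M ^ k).mulVec x := by
    intro k
    induction k with
    | zero => intro x; simp [Matrix.one_mulVec]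
    | succ k ihk =>
      intro x
      rw [pow_succ', pow_succ']
      rw [Module.End.mul_apply, ihk, hφ]
      rw [Matrix.toLin'_apply, Matrix.mulVec_mulVec]
  have hcommP : ∀ (k : ℕ) (v : ι → ℂ), j ((M ^ k).mulVec v) = (M ^ k).mulVec (j v) := by
    intro k
    induction k with
    | zero => intro v; simp [Matrix.one_mulVec]
    | succ k ihk =>
      intro v
      rw [pow_succ', ← Matrix.mulVec_mulVec, hcomm, ihk, Matrix.mulVec_mulVec]
  have hUmem : ∀ v : ι → ℂ, v ∈ U ↔ ∃ k : ℕ, (M ^ k).mulVec v = 0 := by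
    intro v
    rw [hU, Module.End.mem_maxGenEigenspace]
    constructor
    · rintro ⟨k, hk⟩
      refine ⟨k, ?_⟩
      rw [← hpow]
      simpa using hk
    · rintro ⟨k, hk⟩
      refine ⟨k, ?_⟩
      simpa [hpow] using hk
  have hjU : ∀ v ∈ U, j v ∈ U := by
    intro v hv
    rw [hUmem] at hv ⊢
    obtain ⟨k, hk⟩ := hv
    refine ⟨k, ?_⟩
    rw [← hcommP, hk]
    funext i
    simp [hj, cv, Matrix.mulVec, dotProduct]
  set F : U → U := fun u => ⟨j u.1, hjU u.1 u.2⟩ with hF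
  have := even_finrank_aux (Module.finrank ℂ U) U inferInstance inferInstance inferInstance
    le_rfl F ?_ ?_ ?_
  · exact this
  · intro u v
    apply Subtype.ext
    exact hjadd u.1 v.1
  · intro c u
    apply Subtype.ext
    exact hjsmul c u.1
  · intro u
    apply Subtype.ext
    exact hjj u.1

lemma even_natTrailingDegree_charpoly
    (hJJ : Jm * Jm = -1) (hJc : Jm.map conj' = Jm)
    (hq : Jm * M = M.map conj' * Jm) :
    Even (M.charpoly.natTrailingDegree) := by
  have h1 : LinearMap.charpoly (Matrix.toLin' M : Module.End ℂ (ι → ℂ)) = M.charpoly := by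
    rw [← LinearMap.charpoly_toMatrix (Matrix.toLin' M) (Pi.basisFun ℂ ι),
      LinearMap.toMatrix_eq_toMatrix', LinearMap.toMatrix'_toLin']
  rw [← h1, ← LinearMap.finrank_maxGenEigenspace_zero_eq]
  exact even_finrank_maxGen Jm M hJJ hJc hq

end Quaternionic

end DetBlockConjAux

open DetBlockConjAux in
theorem det_blockConj_nonneg (n : ℕ) (A B : Matrix (Fin n) (Fin n) ℂ) :
    ((Matrix.fromBlocks A B (-(B.map (starRingEnd ℂ))) (A.map (starRingEnd ℂ))).det).im = 0 ∧
    0 ≤ ((Matrix.fromBlocks A B (-(B.map (starRingEnd ℂ))) (A.map (starRingEnd ℂ))).det).re := by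
  set Tm : Matrix (Fin n ⊕ Fin n) (Fin n ⊕ Fin n) ℂ :=
    Matrix.fromBlocks A B (-(B.map (starRingEnd ℂ))) (A.map (starRingEnd ℂ)) with hTm
  set Jm : Matrix (Fin n ⊕ Fin n) (Fin n ⊕ Fin n) ℂ :=
    Matrix.fromBlocks 0 1 (-1) 0 with hJm
  have hdc : ∀ (X : Matrix (Fin n) (Fin n) ℂ),
      (X.map (starRingEnd ℂ)).map (starRingEnd ℂ) = X := by
    intro X; ext i j; simp
  have hJJ : Jm * Jm = -1 := by
    rw [hJm, Matrix.fromBlocks_multiply]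
    ext i j
    cases i <;> cases j <;>
      simp [Matrix.one_apply, Matrix.neg_apply]
  have hJc : Jm.map (starRingEnd ℂ) = Jm := by
    rw [hJm]
    ext i j
    cases i <;> cases j <;>
      simp [Matrix.map_apply, Matrix.one_apply, Matrix.neg_apply, apply_ite]
  have hTmc : Tm.map (starRingEnd ℂ) =
      Matrix.fromBlocks (A.map (starRingEnd ℂ)) (B.map (starRingEnd ℂ)) (-B) A := by
    rw [hTm]
    ext i j
    cases i <;> cases j <;> simp [Matrix.map_apply, Matrix.neg_apply]
  have hq : Jm * Tm = Tm.map (starRingEnd ℂ) * Jm := by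
    rw [hTmc, hTm, hJm, Matrix.fromBlocks_multiply, Matrix.fromBlocks_multiply]
    simp [Matrix.neg_mul, Matrix.mul_neg]
  have hdet0 : IsUnit Jm.det := by
    apply Matrix.isUnit_det_of_right_inverse (B := -Jm)
    rw [Matrix.mul_neg, hJJ, neg_neg]
  have hcp : (Tm.charpoly).map (starRingEnd ℂ) = Tm.charpoly := by
    have h1 := charpoly_eq_of_intertwine Jm Tm (Tm.map (starRingEnd ℂ)) hdet0 hq
    rw [← Matrix.charpoly_map Tm (starRingEnd ℂ)]
    exact h1
  set s : Multiset ℂ := Tm.charpoly.roots with hs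
  have hsplit : Tm.charpoly.Splits := IsAlgClosed.splits _
  have hsmap : s.map (starRingEnd ℂ) = s := by
    rw [hs]
    conv_rhs => rw [← hcp]
    exact (hsplit.roots_map (starRingEnd ℂ)).symm
  have heven : ∀ z : ℂ, z.im = 0 → Even (s.count z) := by
    intro z hz
    rw [hs, Polynomial.count_roots]
    rw [Polynomial.rootMultiplicity_eq_natTrailingDegree, charpoly_comp_shift]
    apply even_natTrailingDegree_charpoly Jm _ hJJ hJc
    have hrz : starRingEnd ℂ z = z := Complex.conj_eq_iff_im.mpr hz
    have hsm : ((z • 1 : Matrix (Fin n ⊕ Fin n) (Fin n ⊕ Fin n) ℂ)).map (starRingEnd ℂ)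
        = z • 1 := by
      ext i j
      by_cases hij : i = j <;>
        simp [Matrix.map_apply, Matrix.smul_apply, Matrix.one_apply, hij, hrz]
    have hmapsub : (Tm - z • 1).map (starRingEnd ℂ)
        = Tm.map (starRingEnd ℂ) - z • 1 := by
      ext i j
      by_cases hij : i = j <;>
        simp [Matrix.map_apply, Matrix.sub_apply, Matrix.smul_apply, Matrix.one_apply, hij, hrz]
    rw [hmapsub, Matrix.mul_sub, Matrix.sub_mul, hq]
    congr 1
    rw [Matrix.mul_smul, Matrix.smul_mul, Matrix.mul_one, Matrix.one_mul]
  obtain ⟨t, ht⟩ := multiset_conj_pair s hsmap heven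
  have hdet : Tm.det = t.prod * (starRingEnd ℂ) t.prod := by
    rw [Matrix.det_eq_prod_roots_charpoly, ← hs, ht, Multiset.prod_add]
    congr 1
    exact (map_multiset_prod (starRingEnd ℂ) t).symm
  rw [hdet, Complex.mul_conj]
  constructor
  · simp
  · simp [Complex.normSq_nonneg]
end
end

section
/- Let A and B be n×n complex matrices, with A and B invertible, and set N = A⁻¹B. If λ is an eigenvalue of conj(N)·N and v is a vector in the generalized eigenspace of conj(N)·N for λ (i.e. (conj(N)·N − λI)^m v = 0 for some m ≥ 1), then conj(N)·conj(v) lies in the generalized eigenspace of conj(N)·N for conj(λ). Consequently, nonreal eigenvalues of conj(N)·N occur in conjugate pairs with equal algebraic multiplicities. -/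
open Matrix Complex Module

/-- `conj(N) * N` for a complex matrix `N`. -/
noncomputable def NbarN {n : ℕ} (N : Matrix (Fin n) (Fin n) ℂ) : Matrix (Fin n) (Fin n) ℂ :=
  N.map (starRingEnd ℂ) * N

lemma map_conj_mulVec {n : ℕ} (M : Matrix (Fin n) (Fin n) ℂ) (v : Fin n → ℂ) :
    M.map (starRingEnd ℂ) *ᵥ star v = star (M *ᵥ v) := by
  funext i
  simp [mulVec, dotProduct, map_sum, Matrix.map_apply, Pi.star_apply]

lemma map_conj_ring {n : ℕ} (M : Matrix (Fin n) (Fin n) ℂ) (μ : ℂ) (m : ℕ) :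
    ((M - μ • 1) ^ m).map (starRingEnd ℂ)
      = (M.map (starRingEnd ℂ) - (starRingEnd ℂ) μ • 1) ^ m := by
  have h : ∀ P : Matrix (Fin n) (Fin n) ℂ, P.map (starRingEnd ℂ)
      = (starRingEnd ℂ).mapMatrix P := fun _ => rfl
  rw [h, map_pow, map_sub, RingHom.mapMatrix_apply, ← h]
  congr 1
  ext i j
  by_cases hij : i = j <;>
    simp [hij, Matrix.smul_apply, Matrix.one_apply, Matrix.map_apply]

open scoped ComplexOrder in
lemma rank_map_conj {n : ℕ} (M : Matrix (Fin n) (Fin n) ℂ) :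
    (M.map (starRingEnd ℂ)).rank = M.rank := by
  have : M.map (starRingEnd ℂ) = (Mᵀ)ᴴ := by
    ext i j; simp [conjTranspose_apply, Matrix.map_apply]
  rw [this, rank_conjTranspose, rank_transpose]

lemma toLin'_sub_smul_pow {n : ℕ} (M : Matrix (Fin n) (Fin n) ℂ) (μ : ℂ) (m : ℕ) :
    (Matrix.toLin' M - μ • 1) ^ m = Matrix.toLin' ((M - μ • 1) ^ m) := by
  set e : Matrix (Fin n) (Fin n) ℂ ≃ₐ[ℂ] ((Fin n → ℂ) →ₗ[ℂ] (Fin n → ℂ)) :=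
    Matrix.toLinAlgEquiv' with he
  have h : ∀ P : Matrix (Fin n) (Fin n) ℂ, Matrix.toLin' P = e P := by
    intro P; ext v; simp [he, Matrix.toLin'_apply, Matrix.toLinAlgEquiv'_apply]
  rw [h, h, ← _root_.map_one e, ← _root_.map_smul e, ← map_sub e, ← map_pow e]

lemma finrank_maxGen {n : ℕ} (M : Matrix (Fin n) (Fin n) ℂ) (μ : ℂ) :
    finrank ℂ (Module.End.maxGenEigenspace (Matrix.toLin' M) μ)
      = n - ((M - μ • 1) ^ n).rank := by
  rw [Module.End.maxGenEigenspace_eq_genEigenspace_finrank]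
  rw [show finrank ℂ (Fin n → ℂ) = n by simp]
  rw [Module.End.genEigenspace_nat, toLin'_sub_smul_pow]
  have hmv : Matrix.toLin' ((M - μ • 1) ^ n) = Matrix.mulVecLin ((M - μ • 1) ^ n) := by
    exact Matrix.toLin'_apply' _
  rw [hmv]
  have h2 := LinearMap.finrank_range_add_finrank_ker (Matrix.mulVecLin ((M - μ • 1) ^ n))
  have hrank : ((M - μ • 1) ^ n).rank
      = finrank ℂ (LinearMap.range (Matrix.mulVecLin ((M - μ • 1) ^ n))) := rfl
  have hle : ((M - μ • 1) ^ n).rank ≤ n := by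
    exact (Matrix.rank_le_card_width ((M - μ • 1) ^ n)).trans (Fintype.card_fin n).le
  simp only [show finrank ℂ (Fin n → ℂ) = n by simp] at h2
  omega

theorem genEigenspace_conj_pair (n : ℕ) (A B : Matrix (Fin n) (Fin n) ℂ)
    (hA : IsUnit A.det) (hB : IsUnit B.det)
    (N : Matrix (Fin n) (Fin n) ℂ) (hN : N = A⁻¹ * B)
    (lam : ℂ) (heig : Module.End.HasEigenvalue (Matrix.toLin' (NbarN N)) lam)
    (v : Fin n → ℂ)
    (hv : ∃ m : ℕ, 1 ≤ m ∧ ((NbarN N - lam • 1) ^ m) *ᵥ v = 0) :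
    (∃ m : ℕ, 1 ≤ m ∧
        ((NbarN N - (starRingEnd ℂ) lam • 1) ^ m) *ᵥ (N.map (starRingEnd ℂ) *ᵥ star v) = 0) ∧
    (lam.im ≠ 0 →
      Module.finrank ℂ (Module.End.maxGenEigenspace (Matrix.toLin' (NbarN N)) lam)
        = Module.finrank ℂ
            (Module.End.maxGenEigenspace (Matrix.toLin' (NbarN N)) ((starRingEnd ℂ) lam))) := by
  set C := N.map (starRingEnd ℂ) with hC
  set M := NbarN N with hM
  have hMCN : M = C * N := rfl
  have hNdet : IsUnit N.det := by
    rw [hN, det_mul, det_nonsing_inv]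
    exact (isUnit_ringInverse.mpr hA).mul hB
  -- conj of M is N * C
  have hMconj : M.map (starRingEnd ℂ) = N * C := by
    have : ∀ P : Matrix (Fin n) (Fin n) ℂ, P.map (starRingEnd ℂ)
        = (starRingEnd ℂ).mapMatrix P := fun _ => rfl
    rw [hMCN, this, _root_.map_mul, RingHom.mapMatrix_apply, RingHom.mapMatrix_apply, ← hC]
    congr 1
    ext i j
    simp [hC, Matrix.map_apply]
  have lamb := (starRingEnd ℂ) lam
  -- semiconj : (M - c)^m * C = C * (N*C - c)^m
  have semi : ∀ (c : ℂ) (m : ℕ), (M - c • 1) ^ m * C = C * (N * C - c • 1) ^ m := by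
    intro c m
    have h1 : SemiconjBy C (N * C - c • 1) (M - c • 1) := by
      unfold SemiconjBy
      rw [mul_sub, sub_mul, hMCN, mul_assoc]
      congr 1
      rw [Matrix.mul_smul, Matrix.smul_mul, mul_one, one_mul]
    exact (h1.pow_right m).symm
  -- semiconj with N : N * (M - c)^m = (N*C - c)^m * N
  have semiN : ∀ (c : ℂ) (m : ℕ), N * (M - c • 1) ^ m = (N * C - c • 1) ^ m * N := by
    intro c m
    have h1 : SemiconjBy N (M - c • 1) (N * C - c • 1) := by
      unfold SemiconjBy
      rw [mul_sub, sub_mul, hMCN, ← mul_assoc]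
      congr 1
      rw [Matrix.mul_smul, Matrix.smul_mul, mul_one, one_mul]
    exact h1.pow_right m
  constructor
  · obtain ⟨m, hm1, hm0⟩ := hv
    refine ⟨m, hm1, ?_⟩
    rw [mulVec_mulVec, semi, ← mulVec_mulVec]
    have : (N * C - (starRingEnd ℂ) lam • 1) ^ m *ᵥ star v = 0 := by
      rw [← hMconj, ← map_conj_ring, map_conj_mulVec, hm0]
      simp
    rw [this, mulVec_zero]
  · intro _
    rw [finrank_maxGen, finrank_maxGen]
    congr 1
    -- rank ((M - conj lam)^n) = rank ((N*C - conj lam)^n) = rank ((M - lam)^n).map conj = rank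
    have h1 : ((M - (starRingEnd ℂ) lam • 1) ^ n).rank
        = ((N * C - (starRingEnd ℂ) lam • 1) ^ n).rank := by
      rw [← Matrix.rank_mul_eq_right_of_isUnit_det N _ hNdet,
        semiN, Matrix.rank_mul_eq_left_of_isUnit_det N _ hNdet]
    have h2 : ((N * C - (starRingEnd ℂ) lam • 1) ^ n).rank = ((M - lam • 1) ^ n).rank := by
      rw [← hMconj, ← map_conj_ring, rank_map_conj]
    rw [h1, h2]
end

section
/- Let N be an invertible n×n complex matrix. Every negative real eigenvalue of the matrix conj(N)·N has even algebraic multiplicity. -/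
open Matrix Complex Module

lemma charpoly_eval_aux {d : ℕ} (M : Matrix (Fin d) (Fin d) ℂ) (r : ℂ) :
    M.charpoly.eval r = (r • (1 : Matrix (Fin d) (Fin d) ℂ) - M).det := by
  rw [Matrix.charpoly, _root_.eval_det, matPolyEquiv_charmatrix]
  rw [Polynomial.eval_sub, Polynomial.eval_X, Polynomial.eval_C]
  congr 1
  rw [Matrix.scalar_apply, Matrix.smul_one_eq_diagonal]

/-- If `f - λ•1` is nilpotent then `det f = λ ^ dim`. -/
lemma det_of_nilpotent_sub {V : Type} [AddCommGroup V] [Module ℂ V] [FiniteDimensional ℂ V]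
    (f : Module.End ℂ V) (lamC : ℂ) (hnil : IsNilpotent (f - lamC • 1)) :
    LinearMap.det f = lamC ^ (finrank ℂ V) := by
  classical
  set d := finrank ℂ V with hd
  let b : Basis (Fin d) ℂ V := finBasis ℂ V
  set Amat := LinearMap.toMatrix b b f with hAmat
  have hmatnil : IsNilpotent (Amat - lamC • 1) := by
    have := hnil.map (LinearMap.toMatrixAlgEquiv b)
    simpa [LinearMap.toMatrixAlgEquiv, map_sub, _root_.map_smul, hAmat] using this
  set ν : Matrix (Fin d) (Fin d) ℂ := lamC • 1 - Amat with hν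
  have hνnil : IsNilpotent ν := by
    have h' : ν = -(Amat - lamC • 1) := (neg_sub _ _).symm
    rw [h']; exact hmatnil.neg
  have hcp : ν.charpoly = Polynomial.X ^ d := by
    have h := Matrix.isNilpotent_charpoly_sub_pow_of_isNilpotent hνnil
    have h0 : ν.charpoly - Polynomial.X ^ (Fintype.card (Fin d)) = 0 := h.eq_zero
    have := sub_eq_zero.mp h0
    simpa using this
  have heval : ν.charpoly.eval lamC = Amat.det := by
    rw [charpoly_eval_aux]
    congr 1
    rw [hν, sub_sub_cancel]
  rw [← LinearMap.det_toMatrix b, ← heval, hcp]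
  simp

/-- Abstract key lemma: if an endomorphism of a finite-dimensional complex vector space is
the square of an antilinear map and is `λ•1 + nilpotent` with `λ < 0`, the dimension is even. -/
lemma even_finrank_of_antilinear {V : Type} [AddCommGroup V] [Module ℂ V]
    [FiniteDimensional ℂ V] (f : Module.End ℂ V) (J : V → V)
    (hJadd : ∀ v w, J (v + w) = J v + J w)
    (hJsmul : ∀ (c : ℂ) (v : V), J (c • v) = star c • J v)
    (hJJ : ∀ v, J (J v) = f v)
    (lam : ℝ) (hlam : lam < 0)
    (hnil : IsNilpotent (f - (lam : ℂ) • 1)) :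
    Even (finrank ℂ V) := by
  classical
  set d := finrank ℂ V with hd
  rcases Nat.even_or_odd d with he | ho
  · exact he
  exfalso
  let b : Basis (Fin d) ℂ V := finBasis ℂ V
  let e : V ≃ₗ[ℂ] (Fin d → ℂ) := b.equivFun
  set f0 : (Fin d → ℂ) → (Fin d → ℂ) := fun x => e (J (e.symm x)) with hf0
  have hf0add : ∀ x y, f0 (x + y) = f0 x + f0 y := by
    intro x y; simp [hf0, map_add, hJadd]
  have hf0smul : ∀ (c : ℂ) x, f0 (c • x) = star c • f0 x := by
    intro c x; simp [hf0, _root_.map_smul, hJsmul]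
  let A : (Fin d → ℂ) →ₗ[ℂ] (Fin d → ℂ) :=
    { toFun := fun x => star (f0 x)
      map_add' := fun x y => by simp [hf0add]
      map_smul' := fun c x => by simp [hf0smul, star_smul] }
  have hAx : ∀ x, A x = star (f0 x) := fun _ => rfl
  let B : (Fin d → ℂ) →ₗ[ℂ] (Fin d → ℂ) :=
    { toFun := fun x => star (A (star x))
      map_add' := fun x y => by simp [star_add]
      map_smul' := fun c x => by simp [star_smul] }
  have hBx : ∀ x, B x = star (A (star x)) := fun _ => rfl
  have hcomp : (B ∘ₗ A) = (e : V →ₗ[ℂ] (Fin d → ℂ)) ∘ₗ f ∘ₗ (e.symm : (Fin d → ℂ) →ₗ[ℂ] V) := by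
    apply LinearMap.ext; intro x
    have h1 : B (A x) = f0 (f0 x) := by
      rw [hBx, hAx, star_star, hAx, star_star]
    simp only [LinearMap.comp_apply, h1, hf0, LinearEquiv.coe_coe]
    rw [LinearEquiv.symm_apply_apply, hJJ]
  have hdetf : LinearMap.det f = ((lam : ℂ)) ^ d := det_of_nilpotent_sub f _ hnil
  have hdetBA : LinearMap.det (B ∘ₗ A) = LinearMap.det f := by
    rw [hcomp]; exact LinearMap.det_conj f e
  have hmatB : LinearMap.toMatrix' B = (LinearMap.toMatrix' A).map (starRingEnd ℂ) := by
    ext i j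
    rw [LinearMap.toMatrix'_apply, Matrix.map_apply, LinearMap.toMatrix'_apply]
    have hstarind : star (fun j' => if j' = j then (1:ℂ) else 0)
        = (fun j' => if j' = j then (1:ℂ) else 0) := by
      funext k; simp [Pi.star_apply, apply_ite (star : ℂ → ℂ)]
    rw [hBx, Pi.star_single, star_one]
    rfl
  have hdetB : LinearMap.det B = starRingEnd ℂ (LinearMap.det A) := by
    rw [← LinearMap.det_toMatrix', ← LinearMap.det_toMatrix', hmatB,
      ← RingHom.mapMatrix_apply, ← RingHom.map_det]
  have key : ((lam : ℂ)) ^ d = starRingEnd ℂ (LinearMap.det A) * LinearMap.det A := by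
    rw [← hdetf, ← hdetBA, LinearMap.det_comp, hdetB]
  have hre : ((lam : ℂ)) ^ d = ((normSq (LinearMap.det A) : ℝ) : ℂ) := by
    rw [key, mul_comm, Complex.mul_conj]
  have hre' : ((lam ^ d : ℝ) : ℂ) = ((normSq (LinearMap.det A) : ℝ) : ℂ) := by
    push_cast
    exact_mod_cast hre
  have heq : lam ^ d = normSq (LinearMap.det A) := by exact_mod_cast hre'
  have h1 : lam ^ d < 0 := Odd.pow_neg ho hlam
  have h2 : (0:ℝ) ≤ normSq (LinearMap.det A) := normSq_nonneg _
  linarith [heq ▸ h2]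

theorem neg_eigenvalue_even_multiplicity (n : ℕ) (N : Matrix (Fin n) (Fin n) ℂ)
    (hN : IsUnit N.det) (lam : ℝ) (hlam : lam < 0)
    (heig : Module.End.HasEigenvalue (Matrix.toLin' (NbarN N)) (lam : ℂ)) :
    Even (Module.finrank ℂ
      (Module.End.maxGenEigenspace (Matrix.toLin' (NbarN N)) (lam : ℂ))) := by
  classical
  set M : Module.End ℂ (Fin n → ℂ) := Matrix.toLin' (NbarN N) with hM
  set E := M.maxGenEigenspace (lam : ℂ) with hE
  set Nb : Matrix (Fin n) (Fin n) ℂ := N.map (starRingEnd ℂ) with hNb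
  have hstarmul : ∀ (A : Matrix (Fin n) (Fin n) ℂ) (w : Fin n → ℂ),
      star (A.mulVec w) = (A.map (starRingEnd ℂ)).mulVec (star w) := by
    intro A w
    funext i
    show star (∑ j, A i j * w j) = ∑ j, (starRingEnd ℂ) (A i j) * star (w j)
    rw [star_sum]
    exact Finset.sum_congr rfl fun j _ => star_mul' _ _
  have hNbb : Nb.map (starRingEnd ℂ) = N := by
    ext i j; simp [hNb, Matrix.map_apply]
  set J : (Fin n → ℂ) → (Fin n → ℂ) := fun v => Nb.mulVec (star v) with hJ
  have hMapp : ∀ v, M v = (Nb * N).mulVec v := by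
    intro v; rw [hM, Matrix.toLin'_apply]; rfl
  have hJadd : ∀ v w, J (v + w) = J v + J w := by
    intro v w; simp [hJ, star_add, Matrix.mulVec_add]
  have hJsub : ∀ v w, J (v - w) = J v - J w := by
    intro v w; simp [hJ, star_sub, Matrix.mulVec_sub]
  have hJsmul : ∀ (c : ℂ) (v : Fin n → ℂ), J (c • v) = star c • J v := by
    intro c v; simp [hJ, star_smul, Matrix.mulVec_smul]
  have hJJ : ∀ v, J (J v) = M v := by
    intro v
    show Nb.mulVec (star (Nb.mulVec (star v))) = M v
    rw [hstarmul, hNbb, star_star, Matrix.mulVec_mulVec, ← hMapp]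
  have hJM : ∀ v, J (M v) = M (J v) := by
    intro v
    rw [hMapp, hMapp]
    show Nb.mulVec (star ((Nb * N).mulVec v)) = (Nb * N).mulVec (Nb.mulVec (star v))
    rw [hstarmul, Matrix.map_mul, hNbb]
    rw [Matrix.mulVec_mulVec, Matrix.mulVec_mulVec, ← hNb, ← Matrix.mul_assoc]
  -- J commutes with (M - λ•1)
  have hJg : ∀ v, (M - (lam:ℂ) • 1) (J v) = J ((M - (lam:ℂ) • 1) v) := by
    intro v
    have h1 : (M - (lam:ℂ) • 1) v = M v - (lam:ℂ) • v := by
      simp [LinearMap.sub_apply, LinearMap.smul_apply]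
    have h2 : (M - (lam:ℂ) • 1) (J v) = M (J v) - (lam:ℂ) • (J v) := by
      simp [LinearMap.sub_apply, LinearMap.smul_apply]
    rw [h1, h2, hJsub, hJsmul, hJM]
    congr 1
    rw [Complex.star_def, Complex.conj_ofReal]
  have hJpow : ∀ (k : ℕ) (v : Fin n → ℂ),
      ((M - (lam:ℂ) • 1) ^ k) (J v) = J (((M - (lam:ℂ) • 1) ^ k) v) := by
    intro k
    induction k with
    | zero => intro v; simp
    | succ k ih =>
      intro v
      rw [pow_succ, Module.End.mul_apply, Module.End.mul_apply, hJg, ih]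
  have hJzero : J 0 = 0 := by simp [hJ]
  have hJE : ∀ v ∈ E, J v ∈ E := by
    intro v hv
    rw [hE, Module.End.mem_maxGenEigenspace] at hv ⊢
    obtain ⟨k, hk⟩ := hv
    exact ⟨k, by rw [hJpow, hk, hJzero]⟩
  -- restriction of M to E
  have hME : ∀ v ∈ E, M v ∈ E :=
    Module.End.mapsTo_maxGenEigenspace_of_comm (Commute.refl M) (lam : ℂ)
  set fE : Module.End ℂ E := M.restrict hME with hfE
  let JE : E → E := fun v => ⟨J v, hJE _ v.2⟩
  have hJEadd : ∀ v w : E, JE (v + w) = JE v + JE w := by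
    intro v w; apply Subtype.ext; exact hJadd v w
  have hJEsmul : ∀ (c : ℂ) (v : E), JE (c • v) = star c • JE v := by
    intro c v; apply Subtype.ext; exact hJsmul c v
  have hJEJE : ∀ v : E, JE (JE v) = fE v := by
    intro v; apply Subtype.ext
    show J (J v) = _
    rw [hJJ]; rfl
  -- nilpotency of fE - λ•1
  have hnil0 := Module.End.isNilpotent_restrict_genEigenspace_top M (lam : ℂ)
  have hnil : IsNilpotent (fE - (lam:ℂ) • 1) := by
    have heq : (M - (lam:ℂ) • (1 : Module.End ℂ (Fin n → ℂ))).restrict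
        (Module.End.mapsTo_genEigenspace_of_comm
          (Algebra.mul_sub_algebraMap_commutes M (lam : ℂ)) (lam : ℂ) ⊤)
        = fE - (lam:ℂ) • 1 := by
      apply LinearMap.ext; intro x
      apply Subtype.ext
      simp [LinearMap.restrict_apply, hfE]
      erw [LinearMap.coe_restrict_apply]
      simp
    rw [← heq]
    exact hnil0
  exact even_finrank_of_antilinear fE JE hJEadd hJEsmul hJEJE lam hlam hnil
end

section
/- Let λ_1, …, λ_n be distinct complex numbers such that conj(λ_j) ≠ ±i·λ_l for all j, l ∈ {1,…,n}, and let ε ∈ {1, −1}. Let V be the n×n matrix with entries V_{jk} = λ_j^{n−k}, E = diag((iε)^{n−1}, (iε)^{n−2}, …, (iε), 1), and W = conj(V)·conj(E)·V⁻¹. Then the (j,k) entry of W equals ∏_{s≠k} (−iε·conj(λ_j) − λ_s)/(λ_k − λ_s), and moreover conj(W)·W = I. -/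
open Matrix Complex Finset Polynomial

/-- The Vandermonde-type matrix with entries `V j k = (λ j)^(n-1-k)`. -/
noncomputable def Vmat {n : ℕ} (lam : Fin n → ℂ) : Matrix (Fin n) (Fin n) ℂ :=
  Matrix.of fun j k => lam j ^ (n - 1 - (k : ℕ))

/-- The diagonal matrix `E = diag((iε)^(n-1), …, (iε), 1)`. -/
noncomputable def Emat (n : ℕ) (ε : ℂ) : Matrix (Fin n) (Fin n) ℂ :=
  Matrix.diagonal fun k => (Complex.I * ε) ^ (n - 1 - (k : ℕ))


-- Lagrange interpolation identity
lemma lag_sum {n : ℕ} (lam : Fin n → ℂ) (hinj : Function.Injective lam)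
    (x : ℂ) (d : ℕ) (hd : d < n) :
    ∑ k, (∏ s ∈ Finset.univ.erase k, ((x - lam s) / (lam k - lam s))) * lam k ^ d = x ^ d := by
  have hvs : Set.InjOn lam (Finset.univ : Finset (Fin n)) := fun a _ b _ h => hinj h
  have hdeg : (X ^ d : ℂ[X]).degree < (Finset.univ : Finset (Fin n)).card := by
    simpa [Polynomial.degree_X_pow] using (by exact_mod_cast hd : (d : WithBot ℕ) < n)
  have h := Lagrange.eq_interpolate (f := (X ^ d : ℂ[X])) hvs hdeg
  have := congrArg (Polynomial.eval x) h
  rw [Lagrange.interpolate_apply] at this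
  simp only [Polynomial.eval_finset_sum, Polynomial.eval_mul, Polynomial.eval_C,
    Polynomial.eval_pow, Polynomial.eval_X, Lagrange.basis, Polynomial.eval_prod,
    Lagrange.basisDivisor, Polynomial.eval_sub] at this
  rw [this]
  apply Finset.sum_congr rfl
  intro k _
  rw [mul_comm]
  congr 1
  exact Finset.prod_congr rfl fun s _ => div_eq_inv_mul _ _

lemma det_Vmat_ne_zero {n : ℕ} (lam : Fin n → ℂ) (hinj : Function.Injective lam) :
    IsUnit (Vmat lam).det := by
  have h1 : Vmat lam = (Matrix.vandermonde lam).submatrix id Fin.revPerm := by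
    ext j k
    simp [Vmat, Matrix.vandermonde, Fin.revPerm, Fin.rev, Nat.sub_sub, Nat.add_comm]
  have h2 : (Matrix.vandermonde lam).det ≠ 0 :=
    Matrix.det_vandermonde_ne_zero_iff.mpr hinj
  rw [h1, Matrix.det_permute' Fin.revPerm]
  exact (isUnit_iff_ne_zero).mpr (by
    simp only [ne_eq, mul_eq_zero, not_or]
    exact ⟨by simp [Int.cast_injective], h2⟩)

theorem conjV_conjE_Vinv (n : ℕ) (lam : Fin n → ℂ)
    (hinj : Function.Injective lam)
    (hil : ∀ j l, (starRingEnd ℂ) (lam j) ≠ Complex.I * lam l ∧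
      (starRingEnd ℂ) (lam j) ≠ -(Complex.I * lam l))
    (ε : ℂ) (hε : ε = 1 ∨ ε = -1) :
    (∀ j k, ((Vmat lam).map (starRingEnd ℂ) * (Emat n ε).map (starRingEnd ℂ) *
        (Vmat lam)⁻¹) j k =
      ∏ s ∈ Finset.univ.erase k,
        ((-(Complex.I * ε) * (starRingEnd ℂ) (lam j) - lam s) / (lam k - lam s))) ∧
    ((Vmat lam).map (starRingEnd ℂ) * (Emat n ε).map (starRingEnd ℂ) *
        (Vmat lam)⁻¹).map (starRingEnd ℂ) *
      ((Vmat lam).map (starRingEnd ℂ) * (Emat n ε).map (starRingEnd ℂ) * (Vmat lam)⁻¹) = 1 := by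
  have hcε : (starRingEnd ℂ) ε = ε := by rcases hε with h | h <;> simp [h]
  have hεε : ε * ε = 1 := by rcases hε with h | h <;> simp [h]
  set c := starRingEnd ℂ with hc
  set μ : Fin n → ℂ := fun j => -(Complex.I * ε) * c (lam j) with hμ
  have hdet : IsUnit (Vmat lam).det := det_Vmat_ne_zero lam hinj
  have hE : (Emat n ε).map c =
      Matrix.diagonal fun k : Fin n => c ((Complex.I * ε) ^ (n - 1 - (k : ℕ))) := by
    unfold Emat
    exact Matrix.diagonal_map (map_zero c)
  -- Step A : conj V * conj E = Vmat μ
  have hA : (Vmat lam).map c * (Emat n ε).map c = Vmat μ := by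
    ext j k
    rw [hE, Matrix.mul_diagonal]
    show c (lam j ^ (n - 1 - (k : ℕ))) * c ((Complex.I * ε) ^ (n - 1 - (k : ℕ)))
      = μ j ^ (n - 1 - (k : ℕ))
    rw [map_pow, map_pow, ← mul_pow, hμ]
    congr 1
    show c (lam j) * c (Complex.I * ε) = -(Complex.I * ε) * c (lam j)
    have h2 : c (Complex.I * ε) = -(Complex.I * ε) := by
      rcases hε with h | h <;> simp [hc, h, Complex.conj_I] <;> ring
    rw [h2]; ring
  -- the candidate matrix
  set Wm : Matrix (Fin n) (Fin n) ℂ := Matrix.of (fun j k =>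
    ∏ s ∈ Finset.univ.erase k, ((μ j - lam s) / (lam k - lam s))) with hWm
  -- Step B : Wm * V = Vmat μ
  have hB : Wm * Vmat lam = Vmat μ := by
    ext j m
    show ∑ k, Wm j k * Vmat lam k m = Vmat μ j m
    show ∑ k, (∏ s ∈ Finset.univ.erase k, ((μ j - lam s) / (lam k - lam s)))
        * lam k ^ (n - 1 - (m : ℕ)) = μ j ^ (n - 1 - (m : ℕ))
    exact lag_sum lam hinj (μ j) (n - 1 - (m : ℕ)) (by have := m.isLt; omega)
  -- Step C : the product equals Wm
  have hC : (Vmat lam).map c * (Emat n ε).map c * (Vmat lam)⁻¹ = Wm := by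
    rw [hA, ← hB, Matrix.mul_assoc, Matrix.mul_nonsing_inv _ hdet, Matrix.mul_one]
  constructor
  · intro j k
    rw [hC]
    rfl
  · have hVc : ((Vmat lam)⁻¹).map c * ((Vmat lam).map c) = 1 := by
      rw [← Matrix.map_mul, Matrix.nonsing_inv_mul _ hdet,
        Matrix.map_one c (map_zero c) (map_one c)]
    have hEE : Emat n ε * (Emat n ε).map c = 1 := by
      have hIε : Complex.I * ε * c (Complex.I * ε) = 1 := by
        have h2 : c (Complex.I * ε) = -(Complex.I * ε) := by
          rcases hε with h | h <;> simp [hc, h, Complex.conj_I] <;> ring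
        rw [h2, show Complex.I * ε * -(Complex.I * ε) = -(Complex.I * Complex.I) * (ε * ε) by ring,
          Complex.I_mul_I, hεε]
        ring
      rw [hE]
      unfold Emat
      rw [Matrix.diagonal_mul_diagonal]
      have hone : (fun k : Fin n => (Complex.I * ε) ^ (n - 1 - (k : ℕ)) *
          c ((Complex.I * ε) ^ (n - 1 - (k : ℕ)))) = fun _ => (1 : ℂ) :=
        funext fun k => by rw [map_pow, ← mul_pow, hIε]; simp
      rw [hone, Matrix.diagonal_one]
    have hWc : ((Vmat lam).map c * (Emat n ε).map c * (Vmat lam)⁻¹).map c =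
        Vmat lam * Emat n ε * ((Vmat lam)⁻¹).map c := by
      rw [Matrix.map_mul, Matrix.map_mul]
      congr 1
      congr 1 <;> · ext i j; simp [Matrix.map_apply, hc]
    rw [hWc]
    calc Vmat lam * Emat n ε * ((Vmat lam)⁻¹).map c *
          ((Vmat lam).map c * (Emat n ε).map c * (Vmat lam)⁻¹)
        = Vmat lam * ((Emat n ε * ((((Vmat lam)⁻¹).map c * (Vmat lam).map c) *
            ((Emat n ε).map c * (Vmat lam)⁻¹)))) := by
          simp only [Matrix.mul_assoc]
      _ = 1 := by
          rw [hVc, Matrix.one_mul, ← Matrix.mul_assoc (Emat n ε), hEE, Matrix.one_mul,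
            Matrix.mul_nonsing_inv _ hdet]
end
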